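/- For nonnegative integers i₁, i₂, i₃ with i₂ ≤ i₃, Σ_{ℓ=0}^{i₃−i₂−1} C(i₃+i₁−1, ℓ) = Σ_{ℓ=0}^{i₃−i₂−1} C(i₁+i₂+ℓ, ℓ)·c_ℓ, where c_ℓ = 2^{i₃−i₂−ℓ−2} if ℓ < i₃−i₂−1 and c_ℓ = 1 if ℓ = i₃−i₂−1. -/

import Mathlib

open Finset

lemma sumL_rec (m n : ℕ) :
    ∑ ℓ ∈ range (n+2), Nat.choose (m+n+1) ℓ
      = 2 * ∑ ℓ ∈ range (n+1), Nat.choose (m+n) ℓ + Nat.choose (m+n) (n+1) := by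
  have h1 : ∑ ℓ ∈ range (n+2), Nat.choose (m+n+1) ℓ
      = ∑ ℓ ∈ range (n+1), (Nat.choose (m+n) ℓ + Nat.choose (m+n) (ℓ+1)) + 1 := by
    rw [Finset.sum_range_succ' (fun ℓ => Nat.choose (m+n+1) ℓ)]
    simp [Nat.choose_succ_succ]
  have h2 : ∑ ℓ ∈ range (n+2), Nat.choose (m+n) ℓ
      = ∑ ℓ ∈ range (n+1), Nat.choose (m+n) (ℓ+1) + 1 := by
    rw [Finset.sum_range_succ' (fun ℓ => Nat.choose (m+n) ℓ)]
    simp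
  have h3 : ∑ ℓ ∈ range (n+2), Nat.choose (m+n) ℓ
      = ∑ ℓ ∈ range (n+1), Nat.choose (m+n) ℓ + Nat.choose (m+n) (n+1) :=
    Finset.sum_range_succ _ _
  rw [h1, Finset.sum_add_distrib]
  omega

lemma key (m : ℕ) : ∀ n, ∑ ℓ ∈ range (n+1), Nat.choose (m+n) ℓ
    = ∑ ℓ ∈ range (n+1), Nat.choose (m+ℓ) ℓ * (if ℓ < n then 2^(n-ℓ-1) else 1) := by
  intro n
  induction n with
  | zero => simp
  | succ n ih =>
    have hT : ∑ ℓ ∈ range (n+2), Nat.choose (m+ℓ) ℓ * (if ℓ < n+1 then 2^(n+1-ℓ-1) else 1)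
        + Nat.choose (m+n) n
        = 2 * ∑ ℓ ∈ range (n+1), Nat.choose (m+ℓ) ℓ * (if ℓ < n then 2^(n-ℓ-1) else 1)
          + Nat.choose (m+n+1) (n+1) := by
      rw [Finset.sum_range_succ]
      have e1 : ∀ ℓ ∈ range (n+1),
          Nat.choose (m+ℓ) ℓ * (if ℓ < n+1 then 2^(n+1-ℓ-1) else 1)
            = Nat.choose (m+ℓ) ℓ * 2^(n-ℓ) := by
        intro ℓ hl
        rw [Finset.mem_range] at hl
        rw [if_pos hl, show n+1-ℓ-1 = n-ℓ by omega]
      rw [Finset.sum_congr rfl e1]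
      have e2 : ∀ ℓ ∈ range (n+1),
          2 * (Nat.choose (m+ℓ) ℓ * (if ℓ < n then 2^(n-ℓ-1) else 1))
            = Nat.choose (m+ℓ) ℓ * 2^(n-ℓ) + (if ℓ = n then Nat.choose (m+n) n else 0) := by
        intro ℓ hl
        rw [Finset.mem_range] at hl
        by_cases hln : ℓ < n
        · rw [if_pos hln, if_neg (by omega)]
          have : 2 * 2^(n-ℓ-1) = 2^(n-ℓ) := by
            rw [← pow_succ']
            congr 1
            omega
          rw [add_zero]
          calc 2 * (Nat.choose (m+ℓ) ℓ * 2^(n-ℓ-1))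
              = Nat.choose (m+ℓ) ℓ * (2 * 2^(n-ℓ-1)) := by ring
            _ = _ := by rw [this]
        · have hln' : ℓ = n := by omega
          subst hln'
          simp
          ring
      rw [Finset.mul_sum, Finset.sum_congr rfl e2, Finset.sum_add_distrib,
        Finset.sum_ite_eq' (range (n+1)) n (fun _ => Nat.choose (m+n) n),
        if_pos (Finset.mem_range.mpr (by omega))]
      simp [if_neg (lt_irrefl (n+1))]
      have hp : Nat.choose (m+n+1) (n+1) = Nat.choose (m+n) n + Nat.choose (m+n) (n+1) :=
        Nat.choose_succ_succ _ _
      have heq : Nat.choose (m+(n+1)) (n+1) = Nat.choose (m+n+1) (n+1) := rfl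
      omega
    have hL := sumL_rec m n
    have hp : Nat.choose (m+n+1) (n+1) = Nat.choose (m+n) n + Nat.choose (m+n) (n+1) :=
      Nat.choose_succ_succ _ _
    show ∑ ℓ ∈ range (n+2), Nat.choose (m+n+1) ℓ
      = ∑ ℓ ∈ range (n+2), Nat.choose (m+ℓ) ℓ * (if ℓ < n+1 then 2^(n+1-ℓ-1) else 1)
    omega

theorem binom_sum_transform (i₁ i₂ i₃ : ℕ) (h : i₂ ≤ i₃) :
    ∑ ℓ ∈ Finset.range (i₃ - i₂), Nat.choose (i₃ + i₁ - 1) ℓ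
      = ∑ ℓ ∈ Finset.range (i₃ - i₂),
          Nat.choose (i₁ + i₂ + ℓ) ℓ *
            (if ℓ < i₃ - i₂ - 1 then 2 ^ (i₃ - i₂ - ℓ - 2) else 1) := by
  rcases Nat.eq_or_lt_of_le h with heq | hlt
  · subst heq; simp
  · obtain ⟨k, hk⟩ : ∃ k, i₃ - i₂ = k + 1 := ⟨i₃ - i₂ - 1, by omega⟩
    rw [hk]
    have h1 : i₃ + i₁ - 1 = (i₁ + i₂) + k := by omega
    rw [h1]
    have := key (i₁ + i₂) k
    rw [this]
    apply Finset.sum_congr rfl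
    intro ℓ hl
    rw [Finset.mem_range] at hl
    congr 1
    by_cases hc : ℓ < k
    · rw [if_pos hc, if_pos (by omega)]
      congr 1
      omega
    · rw [if_neg hc, if_neg (by omega)]
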